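/- In the influenced leader system on a strongly connected weighted directed graph with fixed leader set S0 ≠ ∅ and positive stubbornness values, the steady-state opinion of every vertex is monotone in the leader set S1: for all S1 ⊆ T1 ⊆ V ∖ S0 and every vertex v ∈ V, x̂(T1)_v ≥ x̂(S1)_v. -/
import Mathlib


open Matrix BigOperators

/-- Minimum principle for the irreducible diagonally-dominant system. -/
lemma minp_aux
    (n : ℕ)
    (A : Matrix (Fin n) (Fin n) ℝ)
    (hA : ∀ u v, 0 ≤ A u v)
    (hconn : ∀ u v : Fin n, Relation.ReflTransGen (fun a b => 0 < A a b) u v)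
    (d : Fin n → ℝ)
    (κ : Fin n → ℝ) (hκ : ∀ v, 0 < κ v)
    (S0 : Finset (Fin n)) (hS0 : S0.Nonempty)
    (S : Finset (Fin n)) (hS0S : S0 ⊆ S)
    (hd : ∀ u, d u = ∑ v, A u v)
    (z : Fin n → ℝ)
    (hz : ∀ v, 0 ≤ (d v + (if v ∈ S then (1:ℝ) else 0) * κ v) * z v - ∑ w, A v w * z w) :
    ∀ v, 0 ≤ z v := by
  by_contra hcon
  push_neg at hcon
  obtain ⟨v1, hv1⟩ := hcon
  obtain ⟨v0, -, hv0⟩ := Finset.exists_min_image Finset.univ z ⟨v1, Finset.mem_univ v1⟩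
  have hmin : ∀ u, z v0 ≤ z u := fun u => hv0 u (Finset.mem_univ u)
  have hneg : z v0 < 0 := lt_of_le_of_lt (hmin v1) hv1
  have hrow : ∀ u, z u = z v0 → u ∉ S ∧ ∀ w, 0 < A u w → z w = z v0 := by
    intro u hu
    have h1 := hz u
    have hsum0 : ∀ w, 0 ≤ A u w * (z w - z u) := fun w =>
      mul_nonneg (hA u w) (by rw [hu]; linarith [hmin w])
    have hsplit : ∑ w, A u w * z w = (∑ w, A u w * (z w - z u)) + d u * z u := by
      rw [hd u, Finset.sum_mul, ← Finset.sum_add_distrib]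
      exact Finset.sum_congr rfl fun w _ => by ring
    have hexp : (d u + (if u ∈ S then (1:ℝ) else 0) * κ u) * z u
        = d u * z u + (if u ∈ S then (1:ℝ) else 0) * κ u * z u := by ring
    have hS2 : ∑ w, A u w * (z w - z u) ≤ (if u ∈ S then (1:ℝ) else 0) * κ u * z u := by
      rw [hsplit, hexp] at h1; linarith
    have hsumnn : 0 ≤ ∑ w, A u w * (z w - z u) := Finset.sum_nonneg fun w _ => hsum0 w
    by_cases huS : u ∈ S
    · exfalso
      simp only [huS, if_true, one_mul] at hS2
      have h3 : 0 ≤ κ u * z u := le_trans hsumnn hS2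
      nlinarith [hκ u, hneg, hu.symm ▸ hneg]
    · refine ⟨huS, ?_⟩
      simp only [huS, if_false, zero_mul] at hS2
      have hall := (Finset.sum_eq_zero_iff_of_nonneg (fun w _ => hsum0 w)).1
        (le_antisymm hS2 hsumnn)
      intro w hw
      have hzw := hall w (Finset.mem_univ w)
      have hz0 : z w - z u = 0 := by
        rcases mul_eq_zero.1 hzw with h | h
        · exact absurd h (ne_of_gt hw)
        · exact h
      rw [hu] at hz0; linarith
  have hprop : ∀ u, Relation.ReflTransGen (fun a b => 0 < A a b) v0 u → z u = z v0 := by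
    intro u h
    induction h with
    | refl => rfl
    | @tail b c hb hbc ih => exact (hrow b ih).2 c hbc
  obtain ⟨s, hs⟩ := hS0
  exact (hrow s (hprop s (hconn v0 s))).1 (hS0S hs)

/-- entry formula for the system matrix -/
lemma mentry_aux (n : ℕ) (d κ e : Fin n → ℝ) (A : Matrix (Fin n) (Fin n) ℝ)
    (z : Fin n → ℝ) (v : Fin n) :
    ((Matrix.diagonal d - A + Matrix.diagonal e * Matrix.diagonal κ).mulVec z) v
      = (d v + e v * κ v) * z v - ∑ w, A v w * z w := by
  simp only [Matrix.mulVec, dotProduct, Matrix.add_apply, Matrix.sub_apply,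
    Matrix.diagonal_mul_diagonal, Matrix.diagonal_apply, sub_mul, add_mul, ite_mul, zero_mul]
  rw [Finset.sum_add_distrib, Finset.sum_sub_distrib, Finset.sum_ite_eq, Finset.sum_ite_eq]
  simp [Finset.mem_univ]
  ring

/-- in the influenced leader system on a strongly connected weighted
directed graph with fixed leader set `S0 ≠ ∅` and positive stubbornness values, the
steady-state opinion of every vertex is monotone in the leader set `S1`: for
`S1 ⊆ T1 ⊆ V ∖ S0` and every vertex `v`, `x̂(T1)_v ≥ x̂(S1)_v`. -/
theorem stmt10
    (n : ℕ) (hn : 2 ≤ n)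
    (A : Matrix (Fin n) (Fin n) ℝ)
    (hA : ∀ u v, 0 ≤ A u v)
    (hconn : ∀ u v : Fin n, Relation.ReflTransGen (fun a b => 0 < A a b) u v)
    (d : Fin n → ℝ) (hd : d = fun u => ∑ v, A u v) (hdpos : ∀ u, 0 < d u)
    (W : Matrix (Fin n) (Fin n) ℝ)
    (hW : W = Aᵀ * Matrix.diagonal (fun u => (d u)⁻¹))
    (L : Matrix (Fin n) (Fin n) ℝ) (hL : L = Matrix.diagonal d * (1 - Wᵀ))
    (S0 : Finset (Fin n)) (hS0 : S0.Nonempty)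
    -- stubbornness values:
    (κ : Fin n → ℝ) (hκ : ∀ v, 0 < κ v)
    -- for every admissible leader set `S1`, the matrix `L + E^{S0 ∪ S1} K` is
    -- invertible:
    (hinv : ∀ S1 : Finset (Fin n), S1 ⊆ S0ᶜ → IsUnit
      (L + Matrix.diagonal (fun v => if v ∈ S0 ∪ S1 then (1 : ℝ) else 0) *
        Matrix.diagonal κ).det)
    -- `xhat S1 = (L + E^{S0 ∪ S1} K)⁻¹ E^{S1} K 1` is the steady-state opinion vector:
    (xhat : Finset (Fin n) → Fin n → ℝ)
    (hx : ∀ S1 : Finset (Fin n), xhat S1 =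
      (L + Matrix.diagonal (fun v => if v ∈ S0 ∪ S1 then (1 : ℝ) else 0) *
        Matrix.diagonal κ)⁻¹.mulVec
        ((Matrix.diagonal (fun v => if v ∈ S1 then (1 : ℝ) else 0) *
          Matrix.diagonal κ).mulVec (fun _ => 1))) :
    ∀ S1 T1 : Finset (Fin n), S1 ⊆ T1 → T1 ⊆ S0ᶜ →
      ∀ v : Fin n, xhat S1 v ≤ xhat T1 v := by
  intro S1 T1 hST hTc v
  have hS1c : S1 ⊆ S0ᶜ := hST.trans hTc
  have hdd : ∀ u, d u = ∑ v, A u v := fun u => by rw [hd]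
  -- L = D - A
  have hLDA : L = Matrix.diagonal d - A := by
    subst hW hL
    rw [Matrix.mul_sub, Matrix.mul_one, Matrix.transpose_mul, Matrix.transpose_transpose,
      Matrix.diagonal_transpose, ← Matrix.mul_assoc, Matrix.diagonal_mul_diagonal]
    congr 1
    have h1 : (fun u => d u * (d u)⁻¹) = fun _ : Fin n => (1:ℝ) :=
      funext fun u => mul_inv_cancel₀ (hdpos u).ne'
    rw [h1, Matrix.diagonal_one, Matrix.one_mul]
  -- entrywise steady-state equation
  have keyeq : ∀ U : Finset (Fin n), U ⊆ S0ᶜ → ∀ w : Fin n,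
      (d w + (if w ∈ S0 ∪ U then (1:ℝ) else 0) * κ w) * xhat U w
        - ∑ u, A w u * xhat U u
      = (if w ∈ U then (1:ℝ) else 0) * κ w := by
    intro U hU w
    have hM : (L + Matrix.diagonal (fun v => if v ∈ S0 ∪ U then (1:ℝ) else 0) *
          Matrix.diagonal κ).mulVec (xhat U)
        = (Matrix.diagonal (fun v => if v ∈ U then (1:ℝ) else 0) *
          Matrix.diagonal κ).mulVec (fun _ => 1) := by
      rw [hx U, Matrix.mulVec_mulVec, Matrix.mul_nonsing_inv _ (hinv U hU),
        Matrix.one_mulVec]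
    have h2 := congrFun hM w
    rw [hLDA] at h2
    rw [mentry_aux] at h2
    rw [h2]
    simp [Matrix.mulVec, dotProduct, Matrix.diagonal_mul_diagonal,
      Matrix.diagonal_apply, ite_mul, zero_mul, Finset.sum_ite_eq]
  -- xhat S1 ≤ 1
  have hxle1 : ∀ w, xhat S1 w ≤ 1 := by
    have hmp := minp_aux n A hA hconn d κ hκ S0 hS0 (S0 ∪ S1) Finset.subset_union_left hdd
      (fun w => 1 - xhat S1 w) ?_
    · intro w; have := hmp w; simpa using by linarith [hmp w]
    · intro w
      have hk := keyeq S1 hS1c w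
      have hsum : ∑ u, A w u * (1 - xhat S1 u) = d w - ∑ u, A w u * xhat S1 u := by
        rw [hdd w, ← Finset.sum_sub_distrib]
        exact Finset.sum_congr rfl fun u _ => by ring
      rw [hsum]
      by_cases hw1 : w ∈ S1
      · have hwU : w ∈ S0 ∪ S1 := Finset.mem_union_right _ hw1
        simp only [hw1, hwU, if_true] at hk ⊢
        nlinarith [hk]
      · simp only [hw1, if_false, zero_mul] at hk
        by_cases hwU : w ∈ S0 ∪ S1
        · simp only [hwU, if_true] at hk ⊢
          nlinarith [hκ w, hk]
        · simp only [hwU, if_false] at hk ⊢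
          nlinarith [hk]
  -- monotonicity
  have hmp2 := minp_aux n A hA hconn d κ hκ S0 hS0 (S0 ∪ T1) Finset.subset_union_left hdd
    (fun w => xhat T1 w - xhat S1 w) ?_
  · linarith [hmp2 v]
  · intro w
    have hkS := keyeq S1 hS1c w
    have hkT := keyeq T1 hTc w
    have hsum : ∑ u, A w u * (xhat T1 u - xhat S1 u)
        = (∑ u, A w u * xhat T1 u) - ∑ u, A w u * xhat S1 u := by
      rw [← Finset.sum_sub_distrib]
      exact Finset.sum_congr rfl fun u _ => by ring
    rw [hsum]
    have hx1 := hxle1 w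
    by_cases hw0 : w ∈ S0
    · have hwT : w ∉ T1 := by
        intro h; exact (Finset.mem_compl.1 (hTc h)) hw0
      have hwS : w ∉ S1 := fun h => hwT (hST h)
      have hUS : w ∈ S0 ∪ S1 := Finset.mem_union_left _ hw0
      have hUT : w ∈ S0 ∪ T1 := Finset.mem_union_left _ hw0
      simp only [hwT, hwS, hUS, hUT, if_true, if_false, zero_mul] at hkS hkT ⊢
      nlinarith [hkS, hkT]
    · by_cases hwT : w ∈ T1
      · have hUT : w ∈ S0 ∪ T1 := Finset.mem_union_right _ hwT
        by_cases hwS : w ∈ S1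
        · have hUS : w ∈ S0 ∪ S1 := Finset.mem_union_right _ hwS
          simp only [hwT, hwS, hUS, hUT, if_true] at hkS hkT ⊢
          nlinarith [hkS, hkT]
        · have hUS : w ∉ S0 ∪ S1 := by
            simp [Finset.mem_union, hw0, hwS]
          simp only [hwT, hwS, hUS, hUT, if_true, if_false, zero_mul] at hkS hkT ⊢
          nlinarith [hkS, hkT, hκ w, hx1]
      · have hwS : w ∉ S1 := fun h => hwT (hST h)
        have hUS : w ∉ S0 ∪ S1 := by simp [Finset.mem_union, hw0, hwS]
        have hUT : w ∉ S0 ∪ T1 := by simp [Finset.mem_union, hw0, hwT]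
        simp only [hwT, hwS, hUS, hUT, if_false, zero_mul] at hkS hkT ⊢
        nlinarith [hkS, hkT]
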